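/- A finite point-mass system in the hyperbolic plane is balanced (has total signed moment zero) with respect to every straight line that contains the location of its center of mass. -/

import Mathlib

open Real UpperHalfPlane

noncomputable section

/-- `Z` lies on the geodesic segment from `X` to `Y` (hyperbolic betweenness). -/
def HBtw (X Z Y : ℍ) : Prop := dist X Z + dist Z Y = dist X Y

/-- `(Z, z)` is the hyperbolic centroid of the point-masses `(X, x)` and `(Y, y)`:
`Z` lies between `X` and `Y`, the moments about `Z` balance, and
`z = x·cosh d(X,Z) + y·cosh d(Y,Z)`. -/
def IsCentroid (X : ℍ) (x : ℝ) (Y : ℍ) (y : ℝ) (Z : ℍ) (z : ℝ) : Prop :=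
  HBtw X Z Y ∧ x * Real.sinh (dist X Z) = y * Real.sinh (dist Y Z) ∧
    z = x * Real.cosh (dist X Z) + y * Real.cosh (dist Y Z)

/-- A hyperbolic line in the upper half-plane model: a vertical ray or a
semicircle centered on the real axis. -/
inductive HLine : Type
  | vertical (a : ℝ) : HLine
  | circle (c r : ℝ) (hr : 0 < r) : HLine

/-- The set of points of a hyperbolic line. -/
def HLine.carrier : HLine → Set ℍ
  | .vertical a => {z : ℍ | (z : ℂ).re = a}
  | .circle c r _ => {z : ℍ | ‖(z : ℂ) - (c : ℂ)‖ = r}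

/-- The side function of a (directed) hyperbolic line: `1` on one open half-plane,
`-1` on the other, `0` on the line itself. -/
def HLine.sgn : HLine → ℍ → ℝ
  | .vertical a, z => Real.sign ((z : ℂ).re - a)
  | .circle c r _, z => Real.sign (‖(z : ℂ) - (c : ℂ)‖ - r)

/-- `(C, c)` is the center of mass of the finite point-mass system
`(X i, x i), i = 0, …, n`, obtained by iterating the binary centroid operation. -/
def IsSystemCentroid : {n : ℕ} → (Fin (n + 1) → ℍ) → (Fin (n + 1) → ℝ) → ℍ → ℝ → Prop
  | 0, X, x, C, c => C = X 0 ∧ c = x 0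
  | n + 1, X, x, C, c => ∃ C' c', IsSystemCentroid (Fin.init X) (Fin.init x) C' c' ∧
      IsCentroid C' c' (X (Fin.last (n + 1))) (x (Fin.last (n + 1))) C c

lemma cosh_dist_formula (z w : ℍ) :
    Real.cosh (dist z w) = ((z.re - w.re)^2 + z.im^2 + w.im^2) / (2 * z.im * w.im) := by
  rw [UpperHalfPlane.cosh_dist, Complex.dist_eq, Complex.sq_norm, Complex.normSq_apply]
  have hz := z.im_pos; have hw := w.im_pos
  simp only [Complex.sub_re, Complex.sub_im, coe_re, coe_im]
  field_simp
  ring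


def pT (z : ℍ) : ℝ := (z.re^2 + z.im^2 + 1) / (2*z.im)

def pA (z : ℍ) : ℝ := z.re / z.im

def pB (z : ℍ) : ℝ := (z.re^2 + z.im^2 - 1) / (2*z.im)


lemma mink (z w : ℍ) :
    Real.cosh (dist z w) = pT z * pT w - pA z * pA w - pB z * pB w := by
  rw [cosh_dist_formula]; unfold pT pA pB
  have hz := z.im_pos.ne'; have hw := w.im_pos.ne'
  field_simp; ring


lemma norm_one (z : ℍ) : pT z^2 - pA z^2 - pB z^2 = 1 := by
  unfold pT pA pB; have hz := z.im_pos.ne'; field_simp; ring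


lemma pT_pos (z : ℍ) : 0 < pT z := by
  unfold pT; positivity


lemma core (TX AX BX TY AY BY TZ AZ BZ x y z ca sa cb sb : ℝ)
    (hca : ca^2 = 1 + sa^2) (hcb : cb^2 = 1 + sb^2)
    (hX : TX^2 - AX^2 - BX^2 = 1) (hY : TY^2 - AY^2 - BY^2 = 1)
    (hZ : TZ^2 - AZ^2 - BZ^2 = 1)
    (hXZ : ca = TX*TZ - AX*AZ - BX*BZ) (hYZ : cb = TY*TZ - AY*AZ - BY*BZ)
    (hXY : ca*cb + sa*sb = TX*TY - AX*AY - BX*BY)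
    (hm : x * sa = y * sb) (hz : z = x * ca + y * cb)
    (hS : sa*cb + ca*sb ≠ 0) :
    x*TX + y*TY = z*TZ ∧ x*AX + y*AY = z*AZ ∧ x*BX + y*BY = z*BZ := by
  obtain ⟨S, hSdef⟩ : ∃ w, w = sa*cb + ca*sb := ⟨_, rfl⟩
  obtain ⟨w0, hw0⟩ : ∃ w, w = sb*TX + sa*TY - S*TZ := ⟨_, rfl⟩
  obtain ⟨w1, hw1⟩ : ∃ w, w = sb*AX + sa*AY - S*AZ := ⟨_, rfl⟩
  obtain ⟨w2, hw2⟩ : ∃ w, w = sb*BX + sa*BY - S*BZ := ⟨_, rfl⟩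
  rw [← hSdef] at hS
  have e1 : w0*TZ - w1*AZ - w2*BZ = 0 := by
    rw [hw0, hw1, hw2, hSdef]
    linear_combination (-sb) * hXZ + (-sa) * hYZ - (sa*cb + ca*sb) * hZ
  have e2 : w0^2 - w1^2 - w2^2 = 0 := by
    rw [hw0, hw1, hw2, hSdef]
    linear_combination sb^2 * hX + sa^2 * hY + (sa*cb+ca*sb)^2 * hZ
      - 2*sa*sb*hXY + 2*sb*(sa*cb+ca*sb)*hXZ + 2*sa*(sa*cb+ca*sb)*hYZ
      - sb^2 * hca - sa^2 * hcb
  have lag : w1^2 + w2^2 + (w1*BZ - w2*AZ)^2 = 0 := by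
    linear_combination (-(w0^2))*hZ + (-(AZ^2)-BZ^2-1)*e2 + (w0*TZ + w1*AZ + w2*BZ)*e1
  have q1 : w1^2 = 0 := le_antisymm (by linarith [sq_nonneg w2, sq_nonneg (w1*BZ - w2*AZ)]) (sq_nonneg w1)
  have q2 : w2^2 = 0 := le_antisymm (by linarith [sq_nonneg w1, sq_nonneg (w1*BZ - w2*AZ)]) (sq_nonneg w2)
  have h1 : w1 = 0 := pow_eq_zero_iff two_ne_zero |>.mp q1
  have h2 : w2 = 0 := pow_eq_zero_iff two_ne_zero |>.mp q2
  have q0 : w0^2 = 0 := by rw [q1, q2] at e2; linarith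
  have h0 : w0 = 0 := pow_eq_zero_iff two_ne_zero |>.mp q0
  rw [hw0, hSdef] at h0
  rw [hw1, hSdef] at h1
  rw [hw2, hSdef] at h2
  refine ⟨?_, ?_, ?_⟩
  · have key : (sa*cb + ca*sb) * (x*TX + y*TY - z*TZ) = 0 := by
      linear_combination cb*TX*hm - ca*TY*hm + z*h0 - TX*sb*hz - TY*sa*hz
    rcases mul_eq_zero.mp key with h | h
    · exact absurd (hSdef ▸ h) hS
    · linarith
  · have key : (sa*cb + ca*sb) * (x*AX + y*AY - z*AZ) = 0 := by
      linear_combination cb*AX*hm - ca*AY*hm + z*h1 - AX*sb*hz - AY*sa*hz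
    rcases mul_eq_zero.mp key with h | h
    · exact absurd (hSdef ▸ h) hS
    · linarith
  · have key : (sa*cb + ca*sb) * (x*BX + y*BY - z*BZ) = 0 := by
      linear_combination cb*BX*hm - ca*BY*hm + z*h2 - BX*sb*hz - BY*sa*hz
    rcases mul_eq_zero.mp key with h | h
    · exact absurd (hSdef ▸ h) hS
    · linarith



lemma centroid_vec {X Y Z : ℍ} {x y z : ℝ} (h : IsCentroid X x Y y Z z) :
    x * pT X + y * pT Y = z * pT Z ∧ x * pA X + y * pA Y = z * pA Z ∧
      x * pB X + y * pB Y = z * pB Z := by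
  obtain ⟨hb, hm, hz⟩ := h
  by_cases hS : Real.sinh (dist X Z) * Real.cosh (dist Y Z)
      + Real.cosh (dist X Z) * Real.sinh (dist Y Z) = 0
  · have hsa : 0 ≤ Real.sinh (dist X Z) := Real.sinh_nonneg_iff.mpr dist_nonneg
    have hsb : 0 ≤ Real.sinh (dist Y Z) := Real.sinh_nonneg_iff.mpr dist_nonneg
    have hca : 0 < Real.cosh (dist Y Z) := Real.cosh_pos _
    have hcb : 0 < Real.cosh (dist X Z) := Real.cosh_pos _
    have t1 : Real.sinh (dist X Z) * Real.cosh (dist Y Z) = 0 := by nlinarith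
    have t2 : Real.cosh (dist X Z) * Real.sinh (dist Y Z) = 0 := by nlinarith
    have hXZ : X = Z := by
      have := (mul_eq_zero.mp t1).resolve_right hca.ne'
      exact dist_eq_zero.mp (Real.sinh_eq_zero.mp this)
    have hYZ : Y = Z := by
      have := (mul_eq_zero.mp t2).resolve_left hcb.ne'
      exact dist_eq_zero.mp (Real.sinh_eq_zero.mp this)
    subst hXZ
    rw [hYZ] at hz ⊢
    rw [dist_self, Real.cosh_zero] at hz
    refine ⟨by rw [hz]; ring, by rw [hz]; ring, by rw [hz]; ring⟩
  · have hXY : Real.cosh (dist X Z) * Real.cosh (dist Y Z)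
        + Real.sinh (dist X Z) * Real.sinh (dist Y Z)
        = pT X * pT Y - pA X * pA Y - pB X * pB Y := by
      rw [← Real.cosh_add, ← dist_comm Z Y, hb]
      exact mink X Y
    exact core _ _ _ _ _ _ _ _ _ x y z _ _ _ _
      (Real.cosh_sq' _) (Real.cosh_sq' _)
      (norm_one X) (norm_one Y) (norm_one Z)
      (mink X Z) (mink Y Z) hXY hm hz hS


lemma system_vec : ∀ {n : ℕ} (X : Fin (n + 1) → ℍ) (x : Fin (n + 1) → ℝ) (C : ℍ) (c : ℝ),
    IsSystemCentroid X x C c →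
    (∑ i, x i * pT (X i) = c * pT C) ∧ (∑ i, x i * pA (X i) = c * pA C) ∧
      (∑ i, x i * pB (X i) = c * pB C) := by
  intro n
  induction n with
  | zero =>
    intro X x C c h
    obtain ⟨hC, hc⟩ := h
    subst hC; subst hc
    simp [Fin.sum_univ_one]
  | succ n ih =>
    intro X x C c h
    obtain ⟨C', c', hsys, hcen⟩ := h
    obtain ⟨iT, iA, iB⟩ := ih (Fin.init X) (Fin.init x) C' c' hsys
    obtain ⟨cT, cA, cB⟩ := centroid_vec hcen
    refine ⟨?_, ?_, ?_⟩ <;>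
      rw [Fin.sum_univ_castSucc]
    · rw [show ∑ i : Fin (n+1), x i.castSucc * pT (X i.castSucc)
        = ∑ i, (Fin.init x) i * pT ((Fin.init X) i) from rfl, iT]
      exact cT
    · rw [show ∑ i : Fin (n+1), x i.castSucc * pA (X i.castSucc)
        = ∑ i, (Fin.init x) i * pA ((Fin.init X) i) from rfl, iA]
      exact cA
    · rw [show ∑ i : Fin (n+1), x i.castSucc * pB (X i.castSucc)
        = ∑ i, (Fin.init x) i * pB ((Fin.init X) i) from rfl, iB]
      exact cB


lemma cosh_inj_nonneg {x y : ℝ} (hx : 0 ≤ x) (hy : 0 ≤ y)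
    (h : Real.cosh x = Real.cosh y) : x = y := by
  have h1 := Real.cosh_le_cosh.mp h.le
  have h2 := Real.cosh_le_cosh.mp h.ge
  rw [abs_of_nonneg hx, abs_of_nonneg hy] at h1 h2
  linarith


lemma arsinh_le_of_cosh_sq {t d : ℝ} (ht : 0 ≤ t) (hd : 0 ≤ d)
    (h : 1 + t^2 ≤ Real.cosh d ^ 2) : Real.arsinh t ≤ d := by
  have h1 : Real.cosh (Real.arsinh t) ≤ Real.cosh d := by
    rw [Real.cosh_arsinh]
    calc √(1+t^2) ≤ √(Real.cosh d ^2) := Real.sqrt_le_sqrt h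
    _ = Real.cosh d := Real.sqrt_sq (Real.cosh_pos d).le
  have := Real.cosh_le_cosh.mp h1
  rwa [abs_of_nonneg (Real.arsinh_nonneg_iff.mpr ht), abs_of_nonneg hd] at this


lemma infDist_vertical (a : ℝ) (z : ℍ) :
    Metric.infDist z (HLine.vertical a).carrier = Real.arsinh (|z.re - a| / z.im) := by
  have hv := z.im_pos
  set u := z.re with hu
  set v := z.im with hvdef
  have ht : (0:ℝ) ≤ |u - a| / v := by positivity
  have hs2 : (Real.sqrt ((u-a)^2 + v^2))^2 = (u-a)^2 + v^2 := Real.sq_sqrt (by positivity)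
  have hspos : 0 < Real.sqrt ((u-a)^2 + v^2) := Real.sqrt_pos.mpr (by positivity)
  set s := Real.sqrt ((u-a)^2 + v^2) with hsdef
  have w0pos : (0:ℝ) < (Complex.mk a s).im := hspos
  set w0 : ℍ := UpperHalfPlane.mk (Complex.mk a s) w0pos with hw0def
  have hw0re : w0.re = a := rfl
  have hw0im : w0.im = s := rfl
  have hmem : w0 ∈ (HLine.vertical a).carrier := rfl
  apply le_antisymm
  · have hcosh0 : Real.cosh (dist z w0) = Real.sqrt (1 + (|u-a|/v)^2) := by
      rw [cosh_dist_formula, hw0re, hw0im, ← hu, ← hvdef]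
      rw [show (1:ℝ) + (|u-a|/v)^2 = (s/v)^2 by
        rw [div_pow, div_pow, sq_abs]
        field_simp
        linear_combination -hs2]
      rw [Real.sqrt_sq (by positivity)]
      rw [div_eq_div_iff (by positivity) hv.ne']
      linear_combination (-v) * hs2
    have hdist : dist z w0 = Real.arsinh (|u-a|/v) :=
      cosh_inj_nonneg dist_nonneg (Real.arsinh_nonneg_iff.mpr ht)
        (hcosh0.trans (Real.cosh_arsinh _).symm)
    calc Metric.infDist z (HLine.vertical a).carrier ≤ dist z w0 :=
          Metric.infDist_le_dist_of_mem hmem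
    _ = _ := hdist
  · by_contra hlt
    push_neg at hlt
    obtain ⟨w, hw, hdw⟩ := (Metric.infDist_lt_iff ⟨w0, hmem⟩).mp hlt
    have hq := w.im_pos
    have hwre : w.re = a := by rw [← coe_re]; exact hw
    have : Real.arsinh (|u-a|/v) ≤ dist z w := by
      apply arsinh_le_of_cosh_sq ht dist_nonneg
      rw [cosh_dist_formula, hwre, ← hu, ← hvdef]
      have key : ((u-a)^2+v^2+w.im^2)^2*v^2 - ((u-a)^2+v^2)*(2*v*w.im)^2
          = (((u-a)^2+v^2-w.im^2)*v)^2 := by ring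
      rw [div_pow, sq_abs, show (1:ℝ) + (u-a)^2/v^2 = ((u-a)^2+v^2)/v^2 by field_simp; ring]
      rw [div_pow, div_le_div_iff₀ (by positivity) (by positivity)]
      nlinarith [sq_nonneg (((u-a)^2+v^2-w.im^2)*v)]
    linarith


lemma circle_poly (u v p q c r : ℝ) :
    ((u-p)^2+v^2+q^2)^2*(4*r^2*v^2) - (4*r^2*v^2+((u-c)^2+v^2-r^2)^2)*(2*v*q)^2
    = (2*v*(p*(c^2-r^2) - c*(p^2+q^2) - u*(c^2-r^2) + c*(u^2+v^2) + u*(p^2+q^2) - p*(u^2+v^2)))^2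
      + (4*v^2*(q^2*r^2 - q^2*c^2 + p^2*r^2 - p^2*c^2 - 2*v^2*p*c - v^4 + 2*u*q^2*c - 2*u*p*r^2
          + 2*u*p*c^2 + 2*u*p^2*c + 2*u*v^2*c + 2*u*v^2*p + u^2*r^2 - u^2*c^2 - u^2*q^2
          - 4*u^2*p*c - u^2*p^2 - 2*u^2*v^2 + 2*u^3*c + 2*u^3*p - u^4))*((p-c)^2+q^2-r^2) := by
  ring


lemma infDist_circle (c r : ℝ) (hr : 0 < r) (z : ℍ) :
    Metric.infDist z (HLine.circle c r hr).carrier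
      = Real.arsinh (|(z.re - c)^2 + z.im^2 - r^2| / (2*r*z.im)) := by
  have hv := z.im_pos
  set u := z.re with hu
  set v := z.im with hvdef
  set Rr := (u - c)^2 + v^2 - r^2 with hRr
  set S := (u - c)^2 + v^2 + r^2 with hSdef
  have hSpos : 0 < S := by positivity
  have hK2 : (Real.sqrt (Rr^2 + 4*r^2*v^2))^2 = Rr^2 + 4*r^2*v^2 := Real.sq_sqrt (by positivity)
  have hKpos : 0 < Real.sqrt (Rr^2 + 4*r^2*v^2) := Real.sqrt_pos.mpr (by positivity)
  set K := Real.sqrt (Rr^2 + 4*r^2*v^2) with hKdef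
  have ht : (0:ℝ) ≤ |Rr| / (2*r*v) := by positivity
  have hq0 : (0:ℝ) < (Complex.mk (c + 2*r^2*(u-c)/S) (r*K/S)).im := by positivity
  set w0 : ℍ := UpperHalfPlane.mk (Complex.mk (c + 2*r^2*(u-c)/S) (r*K/S)) hq0 with hw0def
  have hw0re : w0.re = c + 2*r^2*(u-c)/S := rfl
  have hw0im : w0.im = r*K/S := rfl
  have hmem : w0 ∈ (HLine.circle c r hr).carrier := by
    show ‖(w0 : ℂ) - (c:ℂ)‖ = r
    rw [Complex.norm_def, Complex.normSq_apply, Complex.sub_re, Complex.sub_im]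
    rw [Complex.ofReal_re, Complex.ofReal_im, coe_re, coe_im, hw0re, hw0im]
    rw [show (c + 2*r^2*(u-c)/S - c) = 2*r^2*(u-c)/S by ring]
    rw [show (2*r^2*(u-c)/S) * (2*r^2*(u-c)/S) + (r*K/S - 0) * (r*K/S - 0) = r^2 by
      field_simp
      linear_combination r^2 * hK2]
    exact Real.sqrt_sq hr.le
  apply le_antisymm
  · have hcosh0 : Real.cosh (dist z w0) = Real.sqrt (1 + (|Rr| / (2*r*v))^2) := by
      rw [cosh_dist_formula, hw0re, hw0im, ← hu, ← hvdef]
      rw [show (1:ℝ) + (|Rr| / (2*r*v))^2 = (K/(2*r*v))^2 by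
        rw [div_pow, div_pow, sq_abs]
        field_simp
        linear_combination -hK2]
      rw [Real.sqrt_sq (by positivity)]
      have hM : ((u-c)*Rr)^2 + (v*S)^2 + (r*K)^2 = K^2*S := by
        rw [hRr, hSdef]
        linear_combination (r^2 - ((u - c)^2 + v^2 + r^2)) * hK2
      have hup : u - (c + 2*r^2*(u-c)/S) = (u-c)*Rr/S := by
        rw [hRr, hSdef]; field_simp; ring
      rw [hup]
      have expand : ((u-c)*Rr/S)^2 + v^2 + (r*K/S)^2
          = (((u-c)*Rr)^2 + (v*S)^2 + (r*K)^2)/S^2 := by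
        field_simp
      rw [expand, hM, div_eq_div_iff (by positivity) (by positivity)]
      field_simp
    have hdist : dist z w0 = Real.arsinh (|Rr| / (2*r*v)) :=
      cosh_inj_nonneg dist_nonneg (Real.arsinh_nonneg_iff.mpr ht)
        (hcosh0.trans (Real.cosh_arsinh _).symm)
    calc Metric.infDist z (HLine.circle c r hr).carrier ≤ dist z w0 :=
          Metric.infDist_le_dist_of_mem hmem
    _ = _ := hdist
  · by_contra hlt
    push_neg at hlt
    obtain ⟨w, hw, hdw⟩ := (Metric.infDist_lt_iff ⟨w0, hmem⟩).mp hlt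
    have hq := w.im_pos
    have hwc : (w.re - c)^2 + w.im^2 = r^2 := by
      have : ‖(w : ℂ) - (c:ℂ)‖ = r := hw
      have h2 := congrArg (· ^ 2) this
      rw [Complex.sq_norm, Complex.normSq_apply, Complex.sub_re, Complex.sub_im,
        Complex.ofReal_re, Complex.ofReal_im, coe_re, coe_im] at h2
      rw [← h2]; ring
    have : Real.arsinh (|Rr| / (2*r*v)) ≤ dist z w := by
      apply arsinh_le_of_cosh_sq ht dist_nonneg
      rw [cosh_dist_formula, ← hu, ← hvdef]
      rw [div_pow, div_pow, sq_abs,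
        show (1:ℝ) + Rr^2/(2*r*v)^2 = (4*r^2*v^2 + Rr^2)/(2*r*v)^2 by
          field_simp; ring]
      rw [div_le_div_iff₀ (by positivity) (by positivity)]
      have hid := circle_poly u v w.re w.im c r
      rw [show (w.re-c)^2+w.im^2-r^2 = 0 from by linarith [hwc], mul_zero, add_zero] at hid
      rw [hRr]
      linarith [hid, sq_nonneg (2*v*(w.re*(c^2-r^2) - c*(w.re^2+w.im^2) - u*(c^2-r^2)
        + c*(u^2+v^2) + u*(w.re^2+w.im^2) - w.re*(u^2+v^2)))]
    linarith


lemma combo_vertical (a : ℝ) (z : ℍ) :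
    (z.re - a)/z.im = (-a)*pT z + 1*pA z + a*pB z := by
  unfold pA pT pB
  have hv := z.im_pos.ne'
  field_simp
  ring


lemma value_vertical (a : ℝ) (z : ℍ) :
    (HLine.vertical a).sgn z * Real.sinh (Metric.infDist z (HLine.vertical a).carrier)
      = (z.re - a)/z.im := by
  rw [infDist_vertical, Real.sinh_arsinh]
  have hsgn : (HLine.vertical a).sgn z = Real.sign (z.re - a) := by
    simp only [HLine.sgn, coe_re]
  rw [hsgn]
  rcases lt_trichotomy (z.re - a) 0 with h|h|h
  · rw [Real.sign_of_neg h, abs_of_neg h]; ring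
  · rw [h]; simp
  · rw [Real.sign_of_pos h, abs_of_pos h]; ring


lemma value_circle (c r : ℝ) (hr : 0 < r) (z : ℍ) :
    (HLine.circle c r hr).sgn z
        * Real.sinh (Metric.infDist z (HLine.circle c r hr).carrier)
      = ((z.re - c)^2 + z.im^2 - r^2) / (2*r*z.im) := by
  rw [infDist_circle, Real.sinh_arsinh]
  have hsgn : (HLine.circle c r hr).sgn z
      = Real.sign (‖(z:ℂ) - (c:ℂ)‖ - r) := rfl
  have hab : (‖(z:ℂ) - (c:ℂ)‖)^2 = (z.re - c)^2 + z.im^2 := by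
    rw [Complex.sq_norm, Complex.normSq_apply, Complex.sub_re, Complex.sub_im,
      Complex.ofReal_re, Complex.ofReal_im, coe_re, coe_im]
    ring
  have hab0 : 0 ≤ ‖(z:ℂ) - (c:ℂ)‖ := norm_nonneg _
  rw [hsgn]
  rcases lt_trichotomy (‖(z:ℂ) - (c:ℂ)‖) r with h|h|h
  · have hRr : (z.re - c)^2 + z.im^2 - r^2 < 0 := by nlinarith
    rw [Real.sign_of_neg (by linarith), abs_of_neg hRr]; ring
  · have hRr : (z.re - c)^2 + z.im^2 - r^2 = 0 := by
      rw [← hab, h]; ring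
    rw [hRr, h]; simp
  · have hRr : 0 < (z.re - c)^2 + z.im^2 - r^2 := by nlinarith
    rw [Real.sign_of_pos (by linarith), abs_of_pos hRr]; ring


lemma combo_circle (c r : ℝ) (hr : 0 < r) (z : ℍ) :
    ((z.re - c)^2 + z.im^2 - r^2) / (2*r*z.im)
      = ((1+c^2-r^2)/(2*r))*pT z + (-(c/r))*pA z + ((r^2-c^2-1)/(2*r) + 1/r)*pB z := by
  unfold pA pT pB
  have hv := z.im_pos.ne'
  field_simp
  ring


lemma balanced_aux {n : ℕ} (X : Fin (n+1) → ℍ) (x : Fin (n+1) → ℝ) (C : ℍ) (c : ℝ)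
    (h : IsSystemCentroid X x C c) (f : ℍ → ℝ) (α β γ ε : ℝ)
    (hf : ∀ z : ℍ, f z = α*pT z + β*pA z + γ*pB z)
    (hC0 : f C = 0) :
    ∑ i, ε * f (X i) * x i = 0 := by
  obtain ⟨sT, sA, sB⟩ := system_vec X x C c h
  have hterm : ∀ i, ε * f (X i) * x i
      = ε*α*(x i*pT (X i)) + ε*β*(x i*pA (X i)) + ε*γ*(x i*pB (X i)) := fun i => by
    rw [hf]; ring
  rw [Finset.sum_congr rfl (fun i _ => hterm i), Finset.sum_add_distrib, Finset.sum_add_distrib,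
    ← Finset.mul_sum, ← Finset.mul_sum, ← Finset.mul_sum, sT, sA, sB]
  have h0 := hf C
  rw [hC0] at h0
  linear_combination (-(ε*c))*h0



/-- Corollary 3.6: a finite point-mass system is balanced (total signed moment zero)
with respect to every directed line containing the location of its center of mass. -/
theorem balanced_through_center_of_mass (n : ℕ) (X : Fin (n + 1) → ℍ)
    (x : Fin (n + 1) → ℝ) (hx : ∀ i, 0 < x i) (C : ℍ) (c : ℝ)
    (h : IsSystemCentroid X x C c) (ℓ : HLine) (hC : C ∈ ℓ.carrier)
    (ε : ℝ) (hε : ε = 1 ∨ ε = -1) :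
    ∑ i, ε * ℓ.sgn (X i) * x i * Real.sinh (Metric.infDist (X i) ℓ.carrier) = 0 := by
  have hstep : ∀ i, ε * ℓ.sgn (X i) * x i * Real.sinh (Metric.infDist (X i) ℓ.carrier)
      = ε * (ℓ.sgn (X i) * Real.sinh (Metric.infDist (X i) ℓ.carrier)) * x i := fun i => by
    ring
  rw [Finset.sum_congr rfl (fun i _ => hstep i)]
  cases ℓ with
  | vertical a =>
    apply balanced_aux X x C c h (fun z => (HLine.vertical a).sgn z * Real.sinh (Metric.infDist z (HLine.vertical a).carrier)) (-a) 1 a ε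
    · intro z
      rw [value_vertical, combo_vertical]
    · rw [value_vertical]
      have hCre : C.re = a := by rw [← coe_re]; exact hC
      rw [hCre, sub_self, zero_div]
  | circle c0 r hr =>
    apply balanced_aux X x C c h (fun z => (HLine.circle c0 r hr).sgn z * Real.sinh (Metric.infDist z (HLine.circle c0 r hr).carrier)) ((1+c0^2-r^2)/(2*r)) (-(c0/r)) ((r^2-c0^2-1)/(2*r) + 1/r) ε
    · intro z
      rw [value_circle, combo_circle c0 r hr]
    · rw [value_circle]
      have hCc : (C.re - c0)^2 + C.im^2 - r^2 = 0 := by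
        have habs : ‖(C:ℂ) - (c0:ℂ)‖ = r := hC
        have h2 := congrArg (· ^ 2) habs
        rw [Complex.sq_norm, Complex.normSq_apply, Complex.sub_re, Complex.sub_im,
          Complex.ofReal_re, Complex.ofReal_im, coe_re, coe_im] at h2
        rw [← h2]; ring
      rw [hCc, zero_div]
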